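/- For every integer r ≥ 4, let k = ⌈r/e⌉ (where e is the base of the natural logarithm), and let L ⊆ {0, 1, …, r−k−1}. If H is an L-intersecting r-uniform hypergraph, then b(H) ≤ r!/r^r. -/

import Mathlib

open Finset

/-- A finite hypergraph: a finite vertex set (of naturals) together with a
finite set of edges, each edge being a subset of the vertex set. -/
structure Hypergraph' where
  verts : Finset ℕ
  edges : Finset (Finset ℕ)
  edge_sub : ∀ e ∈ edges, e ⊆ verts

namespace Hypergraph'

/-- `H` is `r`-uniform if every edge has exactly `r` vertices. -/
def IsUniform (r : ℕ) (H : Hypergraph') : Prop := ∀ e ∈ H.edges, e.card = r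

/-- `H` contains a copy of `F` (i.e. `F` is a subgraph of `H` after an injective
relabelling of the vertices of `F`). -/
def ContainsCopy (F H : Hypergraph') : Prop :=
  ∃ f : ℕ → ℕ, Set.InjOn f ↑F.verts ∧ (∀ v ∈ F.verts, f v ∈ H.verts) ∧
    ∀ e ∈ F.edges, e.image f ∈ H.edges

/-- `H` is `𝓕`-free: it contains no member of `𝓕` as a subgraph. -/
def Free (𝓕 : Set Hypergraph') (H : Hypergraph') : Prop := ∀ F ∈ 𝓕, ¬ F.ContainsCopy H

/-- `f` is a homomorphism from `F` to `H`: the image of every edge of `F` is an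
edge of `H`. -/
def IsHom (f : ℕ → ℕ) (F H : Hypergraph') : Prop :=
  (∀ v ∈ F.verts, f v ∈ H.verts) ∧ ∀ e ∈ F.edges, e.image f ∈ H.edges

/-- `H` is `𝓕`-hom-free: no member of `𝓕` admits a homomorphism to `H`. -/
def HomFree (𝓕 : Set Hypergraph') (H : Hypergraph') : Prop :=
  ∀ F ∈ 𝓕, ∀ f : ℕ → ℕ, ¬ IsHom f F H

/-- The degree of a vertex: the number of edges containing it. -/
def degree (H : Hypergraph') (v : ℕ) : ℕ := (H.edges.filter (fun e => v ∈ e)).card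

/-- `H` is `r`-partite: the vertices can be coloured with `r` colours so that every
edge contains exactly one vertex of each colour. -/
def Partite (r : ℕ) (H : Hypergraph') : Prop :=
  ∃ f : ℕ → Fin r, ∀ e ∈ H.edges, ∀ c : Fin r, (e.filter (fun v => f v = c)).card = 1

/-- `H` and `G` are isomorphic hypergraphs. -/
def Isomorphic (H G : Hypergraph') : Prop :=
  ∃ f : ℕ → ℕ, Set.BijOn f ↑H.verts ↑G.verts ∧ H.edges.image (Finset.image f) = G.edges

end Hypergraph'

/-- The Turán number `ex(n, 𝓕)`: the maximum number of edges in an `𝓕`-free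
`r`-uniform hypergraph on `n` vertices. -/
noncomputable def exNum (r n : ℕ) (𝓕 : Set Hypergraph') : ℕ :=
  sSup {m : ℕ | ∃ H : Hypergraph', H.verts = Finset.range n ∧ H.IsUniform r ∧
    H.Free 𝓕 ∧ H.edges.card = m}

/-- The Turán density `π(𝓕) = lim_{n → ∞} ex(n, 𝓕) / (n choose r)`. -/
noncomputable def turanDensity (r : ℕ) (𝓕 : Set Hypergraph') : ℝ :=
  Filter.lim (Filter.map (fun n : ℕ => (exNum r n 𝓕 : ℝ) / (n.choose r : ℝ)) Filter.atTop)

/-- The three edges of the `(r-i,i)`-tent on vertex set `{1, …, 2r-1}`. -/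
def tentEdges (r i : ℕ) : Finset (Finset ℕ) :=
  {Finset.Icc 1 r,
   Finset.Icc 1 i ∪ Finset.Icc (r + 1) (2 * r - i - 1) ∪ {2 * r - 1},
   Finset.Icc (i + 1) r ∪ Finset.Icc (2 * r - i) (2 * r - 1)}

/-- The `(r-i,i)`-tent `Δ_{(r-i,i)}`. -/
def tent (r i : ℕ) : Hypergraph' where
  verts := Finset.Icc 1 (2 * r - 1) ∪ (tentEdges r i).biUnion id
  edges := tentEdges r i
  edge_sub := fun e he =>
    (Finset.subset_biUnion_of_mem id he).trans Finset.subset_union_right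

/-- The family `𝓕_{r,k} = {Δ_{(r-i,i)} : 1 ≤ i ≤ k}`. -/
def tentFamily (r k : ℕ) : Set Hypergraph' := {H | ∃ i, 1 ≤ i ∧ i ≤ k ∧ H = tent r i}

/-- The Lagrangian of a hypergraph: the maximum of `∑_{e ∈ E} ∏_{v ∈ e} w v` over
nonnegative vertex weightings summing to `1`. -/
noncomputable def lagrangian (H : Hypergraph') : ℝ :=
  sSup {s : ℝ | ∃ w : ℕ → ℝ, (∀ v, 0 ≤ w v) ∧ (∑ v ∈ H.verts, w v) = 1 ∧
    s = ∑ e ∈ H.edges, ∏ v ∈ e, w v}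

/-- The blowup density `b(H) = r! · L(H)`. -/
noncomputable def blowupDensity (r : ℕ) (H : Hypergraph') : ℝ :=
  (r.factorial : ℝ) * lagrangian H

/-- Membership in the set `X_{r,k}`: `0 < x 1 ≤ x 2 ≤ ⋯ ≤ x r = 1`, and
`x i + x j ≤ x (i+j)` whenever `1 ≤ i ≤ k` and `i ≤ j ≤ r - i`. -/
def memX (r k : ℕ) (x : ℕ → ℝ) : Prop :=
  0 < x 1 ∧ (∀ i, 1 ≤ i → i < r → x i ≤ x (i + 1)) ∧ x r = 1 ∧
    ∀ i j, 1 ≤ i → i ≤ k → i ≤ j → i + j ≤ r → x i + x j ≤ x (i + j)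

/-- The interval `[L, R]` is uniform for `x`: `x i = x L + (i - L) * x 1` on it. -/
def UniformIntv (x : ℕ → ℝ) (L R : ℕ) : Prop :=
  ∀ i, L ≤ i → i ≤ R → x i = x L + ((i - L : ℕ) : ℝ) * x 1

/-- `[L, R]` is a segment: a uniform interval (inside `[0, r]`) that is not properly
contained in any other uniform interval. -/
def IsSegment (r : ℕ) (x : ℕ → ℝ) (L R : ℕ) : Prop :=
  L ≤ R ∧ R ≤ r ∧ UniformIntv x L R ∧
    ∀ L' R', L' ≤ L → R ≤ R' → R' ≤ r → UniformIntv x L' R' → L' = L ∧ R' = R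

/-- Shannon entropy (base 2) of a finitely supported distribution `p` on `s`. -/
noncomputable def ent {α : Type*} (s : Finset α) (p : α → ℝ) : ℝ :=
  ∑ a ∈ s, -(p a * Real.logb 2 (p a))

/-- Entropy of the pushforward of `p` along `g` (the entropy of `g(X)`). -/
noncomputable def pushEnt {α β : Type*} [DecidableEq β] (s : Finset α) (p : α → ℝ)
    (g : α → β) : ℝ :=
  ent (s.image g) (fun b => ∑ a ∈ s.filter (fun a => g a = b), p a)

/-- All tuples in `V(H)^r`. -/
def tupleSpace (r : ℕ) (H : Hypergraph') : Finset (Fin r → ℕ) :=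
  Fintype.piFinset fun _ : Fin r => H.verts

/-- The joint entropy `H(X_1, …, X_r)` of a random tuple with distribution `p`. -/
noncomputable def jointEnt (r : ℕ) (H : Hypergraph') (p : (Fin r → ℕ) → ℝ) : ℝ :=
  ent (tupleSpace r H) p

/-- The entropy `H(X_i, X_{i+1}, …, X_r)` of the suffix starting at position `i`
(1-indexed) of a random tuple with distribution `p`. -/
noncomputable def suffixEnt (r : ℕ) (H : Hypergraph') (p : (Fin r → ℕ) → ℝ) (i : ℕ) : ℝ :=
  pushEnt (tupleSpace r H) p (fun t (j : Fin r) => if i - 1 ≤ (j : ℕ) then t j else 0)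

/-- The entropy `H(X_{j+1})` of the single coordinate `j` (0-indexed). -/
noncomputable def coordEnt (r : ℕ) (H : Hypergraph') (p : (Fin r → ℕ) → ℝ) (j : Fin r) : ℝ :=
  pushEnt (tupleSpace r H) p (fun t => t j)

/-- `p` is the distribution of a random edge with uniform ordering on `H`:
nonnegative, total mass one, supported on tuples whose value set is an edge, and
exchangeable (invariant under permutations of the coordinates). -/
def IsRandomEdge (r : ℕ) (H : Hypergraph') (p : (Fin r → ℕ) → ℝ) : Prop :=
  (∀ t, 0 ≤ p t) ∧
  (∑ t ∈ tupleSpace r H, p t = 1) ∧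
  (∀ t, p t ≠ 0 → Finset.image t Finset.univ ∈ H.edges) ∧
  (∀ σ : Equiv.Perm (Fin r), ∀ t, p (t ∘ σ) = p t)

/-- Every pair of distinct vertices lies in a common edge. -/
def TwoCovered (H : Hypergraph') : Prop :=
  ∀ u ∈ H.verts, ∀ v ∈ H.verts, u ≠ v → ∃ e ∈ H.edges, u ∈ e ∧ v ∈ e

/-- `G` is a blowup of `G0`. -/
def IsBlowup (G0 G : Hypergraph') : Prop :=
  ∃ B : ℕ → Finset ℕ,
    (∀ v ∈ G0.verts, (B v).Nonempty) ∧
    (∀ u ∈ G0.verts, ∀ v ∈ G0.verts, u ≠ v → Disjoint (B u) (B v)) ∧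
    G.verts = G0.verts.biUnion B ∧
    ∀ e : Finset ℕ, e ∈ G.edges ↔
      ∃ e0 ∈ G0.edges, e ⊆ e0.biUnion B ∧ ∀ v ∈ e0, (e ∩ B v).card = 1

/-- `G` is symmetrised: a blowup of a 2-covered `r`-uniform hypergraph. -/
def Symmetrised (r : ℕ) (G : Hypergraph') : Prop :=
  ∃ G0 : Hypergraph', G0.IsUniform r ∧ TwoCovered G0 ∧ IsBlowup G0 G

/-- The family `𝓣_{r,k}` of `r`-uniform hypergraphs with exactly three edges
`A, B, C` such that `A ⊆ B ∪ C`, `(B ∩ C) \ A ≠ ∅` and `|A ∩ B| ≥ r - k`. -/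
def TFamily (r k : ℕ) : Set Hypergraph' :=
  {H | H.IsUniform r ∧ ∃ A B C : Finset ℕ,
    H.verts = A ∪ B ∪ C ∧ H.edges = {A, B, C} ∧
    A ≠ B ∧ A ≠ C ∧ B ≠ C ∧
    A ⊆ B ∪ C ∧ ((B ∩ C) \ A).Nonempty ∧ r - k ≤ (A ∩ B).card}

/-- `H` is `Lset`-intersecting: any two distinct edges intersect in a number of
vertices belonging to `Lset`. -/
def LIntersecting (Lset : Set ℕ) (H : Hypergraph') : Prop :=
  ∀ e ∈ H.edges, ∀ e' ∈ H.edges, e ≠ e' → (e ∩ e').card ∈ Lset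

/-- `H` is a `λ`-tent for the partition `lam = (λ_1, …, λ_m)` of `r`: it has
`m + 1` edges `e 0, e 1, …, e m`, each of size `r`, with `|e 0 ∩ e i| = λ_i`,
the sets `e 0 ∩ e 1, …, e 0 ∩ e m` partitioning `e 0`, and a vertex `v` with
`e i ∩ e j = {v}` for all `1 ≤ i < j ≤ m`. -/
def IsGeneralTent (r : ℕ) (lam : List ℕ) (H : Hypergraph') : Prop :=
  ∃ e : ℕ → Finset ℕ,
    H.verts = (Finset.range (lam.length + 1)).biUnion e ∧
    H.edges = (Finset.range (lam.length + 1)).image e ∧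
    H.edges.card = lam.length + 1 ∧
    (∀ i ∈ Finset.range (lam.length + 1), (e i).card = r) ∧
    (∀ i, 1 ≤ i → i ≤ lam.length → (e 0 ∩ e i).card = lam.getD (i - 1) 0) ∧
    e 0 = (Finset.Icc 1 lam.length).biUnion (fun i => e 0 ∩ e i) ∧
    (∀ i j, 1 ≤ i → i < j → j ≤ lam.length → Disjoint (e 0 ∩ e i) (e 0 ∩ e j)) ∧
    (∃ v : ℕ, ∀ i j, 1 ≤ i → i < j → j ≤ lam.length → e i ∩ e j = {v})

/-- The balanced complete `r`-partite `r`-uniform hypergraph `T^r(n)` on the vertex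
set `{0, …, n-1}`, with parts given by residues modulo `r`: the edges are exactly
the `r`-subsets whose vertices have pairwise distinct residues mod `r`, i.e. those
meeting each part in exactly one vertex. -/
def turanGraph (r n : ℕ) : Hypergraph' where
  verts := Finset.range n
  edges := (Finset.powersetCard r (Finset.range n)).filter
    (fun e => ∀ u ∈ e, ∀ v ∈ e, u ≠ v → u % r ≠ v % r)
  edge_sub := by
    intro e he
    simp only [Finset.mem_filter, Finset.mem_powersetCard] at he
    exact he.1.1

namespace Cor63

/-- Gibbs' inequality (finite, subprobability reference). -/
lemma gibbs {α : Type*} (S : Finset α) (m μ : α → ℝ)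
    (hm0 : ∀ y ∈ S, 0 ≤ m y) (hμ0 : ∀ y ∈ S, 0 ≤ μ y)
    (hmass : ∑ y ∈ S, μ y ≤ ∑ y ∈ S, m y)
    (hsupp : ∀ y ∈ S, 0 < m y → 0 < μ y) :
    ∑ y ∈ S, m y * Real.log (μ y) ≤ ∑ y ∈ S, m y * Real.log (m y) := by
  have key : ∀ y ∈ S, m y * Real.log (μ y) ≤ m y * Real.log (m y) + (μ y - m y) := by
    intro y hy
    rcases (hm0 y hy).eq_or_lt with h0 | hpos
    · simp [← h0, hμ0 y hy]
    · have hμpos := hsupp y hy hpos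
      have hlog : Real.log (μ y) - Real.log (m y) ≤ μ y / m y - 1 := by
        rw [← Real.log_div (ne_of_gt hμpos) (ne_of_gt hpos)]
        exact Real.log_le_sub_one_of_pos (div_pos hμpos hpos)
      have := mul_le_mul_of_nonneg_left hlog (le_of_lt hpos)
      have h2 : m y * (μ y / m y - 1) = μ y - m y := by
        field_simp
      nlinarith
  calc ∑ y ∈ S, m y * Real.log (μ y)
      ≤ ∑ y ∈ S, (m y * Real.log (m y) + (μ y - m y)) := Finset.sum_le_sum key
    _ = ∑ y ∈ S, m y * Real.log (m y) + (∑ y ∈ S, μ y - ∑ y ∈ S, m y) := by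
        rw [Finset.sum_add_distrib, Finset.sum_sub_distrib]
    _ ≤ ∑ y ∈ S, m y * Real.log (m y) := by linarith

/-- AM-GM: product over a finset of card `r` is at most `(sum/r)^r`. -/
lemma amgm (F : Finset ℕ) (g : ℕ → ℝ) (hg : ∀ v ∈ F, 0 ≤ g v) {r : ℕ} (hr : 0 < r)
    (hcard : F.card = r) :
    ∏ v ∈ F, g v ≤ ((∑ v ∈ F, g v) / r) ^ r := by
  have hrR : (0:ℝ) < r := by exact_mod_cast hr
  have h1 : ∏ v ∈ F, (g v) ^ ((r:ℝ)⁻¹) ≤ ∑ v ∈ F, (r:ℝ)⁻¹ * g v := by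
    apply Real.geom_mean_le_arith_mean_weighted F (fun _ => (r:ℝ)⁻¹) g
    · intro i _; positivity
    · rw [Finset.sum_const, hcard, nsmul_eq_mul]; field_simp
    · exact hg
  have h2 : ∏ v ∈ F, (g v) ^ ((r:ℝ)⁻¹) = (∏ v ∈ F, g v) ^ ((r:ℝ)⁻¹) := by
    rw [← Real.finset_prod_rpow F g hg]
  rw [h2] at h1
  have h3 : ∑ v ∈ F, (r:ℝ)⁻¹ * g v = (∑ v ∈ F, g v) / r := by
    rw [← Finset.mul_sum]; ring
  rw [h3] at h1
  have hprod : 0 ≤ ∏ v ∈ F, g v := Finset.prod_nonneg hg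
  have h4 : ((∏ v ∈ F, g v) ^ ((r:ℝ)⁻¹)) ^ (r:ℝ) ≤ ((∑ v ∈ F, g v) / r) ^ (r:ℝ) := by
    apply Real.rpow_le_rpow (Real.rpow_nonneg hprod _) h1 (le_of_lt hrR)
  rw [← Real.rpow_natCast ((∑ v ∈ F, g v) / r) r] at *
  rw [← Real.rpow_mul hprod] at h4
  have : (r:ℝ)⁻¹ * (r:ℝ) = 1 := by field_simp
  rw [this, Real.rpow_one] at h4
  exact h4



/-- Injective tuples of length `n` with values in `F`. -/
def InjT (n : ℕ) (F : Finset ℕ) : Finset (Fin n → ℕ) :=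
  (Fintype.piFinset fun _ : Fin n => F).filter Function.Injective

lemma mem_InjT {n : ℕ} {F : Finset ℕ} {y : Fin n → ℕ} :
    y ∈ InjT n F ↔ (∀ t, y t ∈ F) ∧ Function.Injective y := by
  simp [InjT, Fintype.mem_piFinset]

lemma InjT_zero {M : Type*} [AddCommMonoid M] (F : Finset ℕ) (G : (Fin 0 → ℕ) → M) :
    ∑ y ∈ InjT 0 F, G y = G (fun i => i.elim0) := by
  have h : InjT 0 F = {fun i => i.elim0} := by
    ext y
    simp only [mem_InjT, Finset.mem_singleton]
    constructor
    · intro _; funext i; exact i.elim0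
    · intro h; exact ⟨fun t => t.elim0, fun a => a.elim0⟩
  rw [h, Finset.sum_singleton]

lemma cons_injective {n : ℕ} {a : ℕ} {z : Fin n → ℕ} (hz : Function.Injective z)
    (ha : ∀ i, z i ≠ a) : Function.Injective (Fin.cons a z) := by
  intro i j h
  rcases Fin.eq_zero_or_eq_succ i with rfl | ⟨i', rfl⟩ <;>
    rcases Fin.eq_zero_or_eq_succ j with rfl | ⟨j', rfl⟩
  · rfl
  · rw [Fin.cons_zero, Fin.cons_succ] at h; exact absurd h.symm (ha j')
  · rw [Fin.cons_zero, Fin.cons_succ] at h; exact absurd h (ha i')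
  · rw [Fin.cons_succ, Fin.cons_succ] at h; rw [hz h]

/-- Decomposition of a sum over injective tuples of length `n+1`. -/
lemma sum_InjT_succ {M : Type*} [AddCommMonoid M] {n : ℕ} (F : Finset ℕ)
    (G : (Fin (n+1) → ℕ) → M) :
    ∑ y ∈ InjT (n+1) F, G y = ∑ a ∈ F, ∑ z ∈ InjT n (F.erase a), G (Fin.cons a z) := by
  rw [Finset.sum_sigma']
  refine Finset.sum_bij' (i := fun y _ => (⟨y 0, Fin.tail y⟩ : Σ _ : ℕ, (Fin n → ℕ)))
    (j := fun p _ => Fin.cons p.1 p.2) ?_ ?_ ?_ ?_ ?_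
  · intro y hy
    rw [mem_InjT] at hy
    simp only [Finset.mem_sigma]
    refine ⟨hy.1 0, ?_⟩
    rw [mem_InjT]
    constructor
    · intro t
      rw [Finset.mem_erase]
      exact ⟨fun h => (Fin.succ_ne_zero t) (hy.2 h), hy.1 t.succ⟩
    · intro i j hij
      exact Fin.succ_injective _ (hy.2 hij)
  · intro p hp
    simp only [Finset.mem_sigma] at hp
    obtain ⟨h1, h2⟩ := hp
    rw [mem_InjT] at h2 ⊢
    constructor
    · intro t
      rcases Fin.eq_zero_or_eq_succ t with rfl | ⟨t', rfl⟩
      · simpa using h1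
      · simp only [Fin.cons_succ]
        exact Finset.mem_of_mem_erase (h2.1 _)
    · exact cons_injective h2.2 (fun i => Finset.ne_of_mem_erase (h2.1 i))
  · intro y _
    exact Fin.cons_self_tail y
  · intro p _
    simp [Fin.tail_cons]
  · intro y _
    rw [Fin.cons_self_tail]

lemma descFactorial_peel (c n : ℕ) : c.descFactorial (n+1) = c * (c-1).descFactorial n := by
  cases c with
  | zero => simp
  | succ c => rw [Nat.succ_descFactorial_succ]; simp

lemma card_InjT (n : ℕ) (F : Finset ℕ) :
    (InjT n F).card = F.card.descFactorial n := by
  induction n generalizing F with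
  | zero =>
    rw [Finset.card_eq_sum_ones, InjT_zero]
    simp
  | succ n ih =>
    rw [Finset.card_eq_sum_ones, sum_InjT_succ]
    have h : ∀ a ∈ F, ∑ _z ∈ InjT n (F.erase a), 1 = (F.card - 1).descFactorial n := by
      intro a ha
      rw [← Finset.card_eq_sum_ones, ih, Finset.card_erase_of_mem ha]
    rw [Finset.sum_congr rfl h, Finset.sum_const, descFactorial_peel, smul_eq_mul]

/-- Coordinate marginal over injective tuples. -/
lemma sum_InjT_coord (n : ℕ) : ∀ (F : Finset ℕ) (t : Fin (n+1)) (φ : ℕ → ℝ),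
    ∑ y ∈ InjT (n+1) F, φ (y t) =
      ((F.card - 1).descFactorial n : ℝ) * ∑ v ∈ F, φ v := by
  induction n with
  | zero =>
    intro F t φ
    rw [sum_InjT_succ]
    have ht : t = 0 := Fin.eq_zero t
    subst ht
    simp only [Fin.cons_zero]
    have h : ∀ a ∈ F, ∑ _z ∈ InjT 0 (F.erase a), φ a = φ a := by
      intro a _; rw [InjT_zero]
    rw [Finset.sum_congr rfl h]
    simp
  | succ n ih =>
    intro F t φ
    rcases Finset.eq_empty_or_nonempty F with rfl | hFne
    · simp [InjT]
    rw [sum_InjT_succ]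
    obtain ⟨a₀, ha₀⟩ := hFne
    have hc1 : 1 ≤ F.card := Finset.card_pos.mpr ⟨a₀, ha₀⟩
    rcases Fin.eq_zero_or_eq_succ t with rfl | ⟨t', rfl⟩
    · simp only [Fin.cons_zero]
      have h : ∀ a ∈ F, ∑ _z ∈ InjT (n+1) (F.erase a), φ a
          = ((F.card - 1).descFactorial (n+1) : ℝ) * φ a := by
        intro a ha
        rw [Finset.sum_const, card_InjT, Finset.card_erase_of_mem ha, nsmul_eq_mul]
      rw [Finset.sum_congr rfl h, ← Finset.mul_sum]
    · simp only [Fin.cons_succ]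
      have h : ∀ a ∈ F, ∑ z ∈ InjT (n+1) (F.erase a), φ (z t')
          = ((F.card - 2).descFactorial n : ℝ) * (∑ v ∈ F, φ v - φ a) := by
        intro a ha
        rw [ih (F.erase a) t' φ, Finset.card_erase_of_mem ha,
          Finset.sum_erase_eq_sub ha]
        have h2 : F.card - 1 - 1 = F.card - 2 := by omega
        rw [h2]
      rw [Finset.sum_congr rfl h]
      have key : ((F.card - 1).descFactorial (n+1) : ℝ)
          = ((F.card - 2).descFactorial n : ℝ) * ((F.card : ℝ) - 1) := by
        rw [descFactorial_peel]
        have h2 : F.card - 1 - 1 = F.card - 2 := by omega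
        rw [h2, Nat.cast_mul, Nat.cast_sub hc1]
        push_cast
        ring
      rw [key, ← Finset.mul_sum]
      have h3 : ∑ a ∈ F, (∑ v ∈ F, φ v - φ a)
          = (F.card : ℝ) * ∑ v ∈ F, φ v - ∑ v ∈ F, φ v := by
        rw [Finset.sum_sub_distrib, Finset.sum_const, nsmul_eq_mul]
      rw [h3]
      ring



open Classical in
/-- Sequential sampling-without-replacement reference measure on tuples. -/
noncomputable def mu (w : ℕ → ℝ) (V : Finset ℕ) : (n : ℕ) → (Fin n → ℕ) → ℝ
  | 0, _ => 1
  | (n+1), y =>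
      (if y 0 ∈ V ∧ (∀ i : Fin n, Fin.tail y i ≠ y 0) ∧ ((∑ i : Fin n, w (Fin.tail y i)) < 1)
        then w (y 0) / (1 - ∑ i : Fin n, w (Fin.tail y i)) else 0) * mu w V n (Fin.tail y)

section muLemmas

variable {w : ℕ → ℝ} {V : Finset ℕ}

lemma mu_nonneg (hw0 : ∀ v, 0 ≤ w v) : ∀ (n : ℕ) (y : Fin n → ℕ), 0 ≤ mu w V n y := by
  intro n
  induction n with
  | zero => intro y; rw [mu]; norm_num
  | succ n ih =>
    intro y
    rw [mu]
    apply mul_nonneg _ (ih _)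
    split_ifs with h
    · exact div_nonneg (hw0 _) (by linarith [h.2.2])
    · exact le_refl 0

lemma mu_zero_of_not_inj : ∀ (n : ℕ) (y : Fin n → ℕ), ¬ Function.Injective y →
    mu w V n y = 0 := by
  intro n
  induction n with
  | zero =>
    intro y hy
    exact absurd (fun i j _ => Subsingleton.elim i j) hy
  | succ n ih =>
    intro y hy
    rw [mu]
    by_cases h1 : ∀ i : Fin n, Fin.tail y i ≠ y 0
    · have h2 : ¬ Function.Injective (Fin.tail y) := by
        intro hinj
        apply hy
        have h3 : y = Fin.cons (y 0) (Fin.tail y) := (Fin.cons_self_tail y).symm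
        rw [h3]
        exact cons_injective hinj h1
      rw [ih _ h2, mul_zero]
    · rw [if_neg (fun hc => h1 hc.2.1), zero_mul]

/-- Decomposition of a sum over all tuples of length `n+1`. -/
lemma sum_pi_succ {M : Type*} [AddCommMonoid M] (V : Finset ℕ) (n : ℕ)
    (G : (Fin (n+1) → ℕ) → M) :
    ∑ y ∈ Fintype.piFinset (fun _ : Fin (n+1) => V), G y
      = ∑ a ∈ V, ∑ z ∈ Fintype.piFinset (fun _ : Fin n => V), G (Fin.cons a z) := by
  rw [Finset.sum_sigma']
  refine Finset.sum_bij' (i := fun y _ => (⟨y 0, Fin.tail y⟩ : Σ _ : ℕ, (Fin n → ℕ)))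
    (j := fun p _ => Fin.cons p.1 p.2) ?_ ?_ ?_ ?_ ?_
  · intro y hy
    rw [Fintype.mem_piFinset] at hy
    simp only [Finset.mem_sigma, Fintype.mem_piFinset]
    exact ⟨hy 0, fun i => hy i.succ⟩
  · intro p hp
    simp only [Finset.mem_sigma, Fintype.mem_piFinset] at hp
    rw [Fintype.mem_piFinset]
    intro t
    rcases Fin.eq_zero_or_eq_succ t with rfl | ⟨t', rfl⟩
    · simpa using hp.1
    · simp only [Fin.cons_succ]
      exact hp.2 t'
  · intro y _
    exact Fin.cons_self_tail y
  · intro p _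
    simp [Fin.tail_cons]
  · intro y _
    rw [Fin.cons_self_tail]

lemma pi_zero_sum {M : Type*} [AddCommMonoid M] (V : Finset ℕ) (G : (Fin 0 → ℕ) → M) :
    ∑ y ∈ Fintype.piFinset (fun _ : Fin 0 => V), G y = G (fun i => i.elim0) := by
  have h : Fintype.piFinset (fun _ : Fin 0 => V) = {fun i => i.elim0} := by
    ext y
    simp only [Fintype.mem_piFinset, Finset.mem_singleton]
    constructor
    · intro _; funext i; exact i.elim0
    · intro _ i; exact i.elim0
  rw [h, Finset.sum_singleton]

/-- The reference measure has total mass at most 1. -/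
lemma mu_mass (hw0 : ∀ v, 0 ≤ w v) (hw1 : ∑ v ∈ V, w v = 1) :
    ∀ n : ℕ, ∑ y ∈ Fintype.piFinset (fun _ : Fin n => V), mu w V n y ≤ 1 := by
  intro n
  induction n with
  | zero => rw [pi_zero_sum, mu]
  | succ n ih =>
    rw [sum_pi_succ, Finset.sum_comm]
    have key : ∀ z ∈ Fintype.piFinset (fun _ : Fin n => V),
        ∑ a ∈ V, mu w V (n+1) (Fin.cons a z) ≤ mu w V n z := by
      intro z hz
      rw [Fintype.mem_piFinset] at hz
      have hconsz : ∀ a, mu w V (n+1) (Fin.cons a z)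
          = (if a ∈ V ∧ (∀ i : Fin n, z i ≠ a) ∧ ((∑ i : Fin n, w (z i)) < 1)
              then w a / (1 - ∑ i : Fin n, w (z i)) else 0) * mu w V n z := by
        intro a
        rw [mu]
        simp only [Fin.cons_zero, Fin.tail_cons]
      simp only [hconsz, ← Finset.sum_mul]
      rcases (mu_nonneg hw0 n z).eq_or_lt with hz0 | hz0
      · rw [← hz0, mul_zero]
      have hzinj : Function.Injective z := by
        by_contra hni
        exact absurd (mu_zero_of_not_inj n z hni).symm (ne_of_lt hz0)
      by_cases hT : (∑ i : Fin n, w (z i)) < 1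
      · have hite : ∀ a ∈ V, (if a ∈ V ∧ (∀ i : Fin n, z i ≠ a) ∧ ((∑ i : Fin n, w (z i)) < 1)
              then w a / (1 - ∑ i : Fin n, w (z i)) else 0)
            = if (∀ i : Fin n, z i ≠ a) then w a / (1 - ∑ i : Fin n, w (z i)) else 0 := by
          intro a ha
          by_cases hcase : ∀ i : Fin n, z i ≠ a
          · rw [if_pos hcase, if_pos ⟨ha, hcase, hT⟩]
          · rw [if_neg hcase, if_neg (fun hc => hcase hc.2.1)]
        rw [Finset.sum_congr rfl hite, Finset.sum_ite, Finset.sum_const, ← Finset.sum_div]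
        simp only [smul_zero, add_zero]
        have himg : ∑ i : Fin n, w (z i) = ∑ v ∈ Finset.image z Finset.univ, w v := by
          rw [Finset.sum_image (fun i _ j _ h => hzinj h)]
        have hfil : V.filter (fun a => ∀ i : Fin n, z i ≠ a)
            = V \ Finset.image z Finset.univ := by
          ext a
          simp only [Finset.mem_filter, Finset.mem_sdiff, Finset.mem_image, Finset.mem_univ,
            true_and]
          constructor
          · rintro ⟨ha, hne⟩; exact ⟨ha, fun ⟨i, hi⟩ => hne i hi⟩
          · rintro ⟨ha, hne⟩; exact ⟨ha, fun i hi => hne ⟨i, hi⟩⟩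
        have hsub : Finset.image z Finset.univ ⊆ V := by
          intro v hv
          rw [Finset.mem_image] at hv
          obtain ⟨i, _, rfl⟩ := hv
          exact hz i
        have hnum : ∑ a ∈ V.filter (fun a => ∀ i : Fin n, z i ≠ a), w a
            = 1 - ∑ i : Fin n, w (z i) := by
          rw [hfil, Finset.sum_sdiff_eq_sub hsub, hw1, himg]
        rw [hnum, div_self (by linarith), one_mul]
      · have hite : ∀ a ∈ V, (if a ∈ V ∧ (∀ i : Fin n, z i ≠ a) ∧ ((∑ i : Fin n, w (z i)) < 1)
              then w a / (1 - ∑ i : Fin n, w (z i)) else 0) = 0 := by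
          intro a _
          rw [if_neg (fun hc => hT hc.2.2)]
        rw [Finset.sum_congr rfl hite, Finset.sum_const, smul_zero, zero_mul]
        exact le_of_lt hz0
    calc ∑ z ∈ Fintype.piFinset (fun _ : Fin n => V), ∑ a ∈ V, mu w V (n+1) (Fin.cons a z)
        ≤ ∑ z ∈ Fintype.piFinset (fun _ : Fin n => V), mu w V n z := Finset.sum_le_sum key
      _ ≤ 1 := ih

/-- On tuples from a "support" set, `mu` is positive and its log expands. -/
lemma mu_support (hw0 : ∀ v, 0 ≤ w v) (e : Finset ℕ) (heV : e ⊆ V)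
    (hpos : ∀ v ∈ e, 0 < w v) (hσ : ∑ v ∈ e, w v ≤ 1) :
    ∀ (n : ℕ) (y : Fin n → ℕ), Function.Injective y → (∀ t, y t ∈ e) →
      0 < mu w V n y ∧ Real.log (mu w V n y)
        = ∑ t : Fin n, (Real.log (w (y t)) - Real.log (1 - ∑ t' ∈ Finset.Ioi t, w (y t'))) := by
  intro n
  induction n with
  | zero =>
    intro y _ _
    rw [mu]
    norm_num
  | succ n ih =>
    intro y hyinj
    intro hye
    have htinj : Function.Injective (Fin.tail y) := by
      intro i j hij
      have := hyinj (show y i.succ = y j.succ from hij)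
      exact Fin.succ_injective _ this
    have htel : ∀ i, Fin.tail y i ∈ e := fun i => hye i.succ
    obtain ⟨ihpos, ihlog⟩ := ih (Fin.tail y) htinj htel
    -- bound the tail sum
    have hTim : ∑ i : Fin n, w (Fin.tail y i)
        = ∑ v ∈ Finset.image (Fin.tail y) Finset.univ, w v := by
      rw [Finset.sum_image (fun i _ j _ h => htinj h)]
    have hsub : Finset.image (Fin.tail y) Finset.univ ⊆ e.erase (y 0) := by
      intro v hv
      rw [Finset.mem_image] at hv
      obtain ⟨i, _, rfl⟩ := hv
      rw [Finset.mem_erase]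
      refine ⟨?_, htel i⟩
      intro h0
      exact absurd (hyinj (show y i.succ = y 0 from h0)) (Fin.succ_ne_zero i)
    have hT1 : ∑ i : Fin n, w (Fin.tail y i) < 1 := by
      have h1 : ∑ v ∈ Finset.image (Fin.tail y) Finset.univ, w v
          ≤ ∑ v ∈ e.erase (y 0), w v :=
        Finset.sum_le_sum_of_subset_of_nonneg hsub (fun v _ _ => hw0 v)
      have h2 : ∑ v ∈ e.erase (y 0), w v = (∑ v ∈ e, w v) - w (y 0) :=
        Finset.sum_erase_eq_sub (hye 0)
      have h3 := hpos (y 0) (hye 0)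
      rw [hTim]
      linarith
    have hguard : y 0 ∈ V ∧ (∀ i : Fin n, Fin.tail y i ≠ y 0)
        ∧ ((∑ i : Fin n, w (Fin.tail y i)) < 1) := by
      refine ⟨heV (hye 0), ?_, hT1⟩
      intro i h0
      exact absurd (hyinj (show y i.succ = y 0 from h0)) (Fin.succ_ne_zero i)
    have hw0pos : 0 < w (y 0) := hpos _ (hye 0)
    have hden : 0 < 1 - ∑ i : Fin n, w (Fin.tail y i) := by linarith
    have hmu : mu w V (n+1) y
        = (w (y 0) / (1 - ∑ i : Fin n, w (Fin.tail y i))) * mu w V n (Fin.tail y) := by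
      rw [mu, if_pos hguard]
    have hmupos : 0 < mu w V (n+1) y := by
      rw [hmu]
      exact mul_pos (div_pos hw0pos hden) ihpos
    refine ⟨hmupos, ?_⟩
    rw [hmu, Real.log_mul (ne_of_gt (div_pos hw0pos hden)) (ne_of_gt ihpos),
      Real.log_div (ne_of_gt hw0pos) (ne_of_gt hden), ihlog, Fin.sum_univ_succ]
    have hIoi0 : ∑ t' ∈ Finset.Ioi (0 : Fin (n+1)), w (y t')
        = ∑ i : Fin n, w (Fin.tail y i) := by
      rw [Fin.sum_Ioi_zero]
      rfl
    have hIoiS : ∀ i : Fin n, ∑ t' ∈ Finset.Ioi i, w (Fin.tail y t')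
        = ∑ t' ∈ Finset.Ioi i.succ, w (y t') := by
      intro i
      rw [Fin.sum_Ioi_succ]
      rfl
    rw [hIoi0]
    congr 1
    apply Finset.sum_congr rfl
    intro i _
    rw [hIoiS i]
    rfl

end muLemmas

/-- Key pointwise estimate: `log (N - j) ≤ log (r - j) + (r/(r-j)) (log N - log r)`. -/
lemma logterm_bound {N r j : ℝ} (hr : 0 < r) (hj : 0 ≤ j) (hjr : j + 1 ≤ r) (hrN : r ≤ N) :
    Real.log (N - j) ≤ Real.log (r - j) + (r / (r - j)) * (Real.log N - Real.log r) := by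
  have hrj : 0 < r - j := by linarith
  have hN : 0 < N := lt_of_lt_of_le hr hrN
  set d : ℝ := Real.log N - Real.log r with hd
  have hd0 : 0 ≤ d := by
    have := Real.log_le_log hr hrN
    simp only [hd]; linarith
  have hd1 : 1 - r / N ≤ d := by
    have h1 : Real.log (r / N) ≤ r / N - 1 := Real.log_le_sub_one_of_pos (div_pos hr hN)
    rw [Real.log_div (ne_of_gt hr) (ne_of_gt hN)] at h1
    simp only [hd]; linarith
  set u : ℝ := j / (r - j) with hu
  have hu0 : 0 ≤ u := div_nonneg hj (le_of_lt hrj)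
  have hrNdiv : 0 ≤ 1 - r / N := by
    rw [sub_nonneg]
    exact div_le_one_of_le₀ hrN (le_of_lt hN)
  have hexp : Real.exp d = N / r := by
    rw [hd, Real.exp_sub, Real.exp_log hN, Real.exp_log hr]
  have hsplit : r / (r - j) = 1 + u := by
    rw [hu, one_add_div (ne_of_gt hrj)]
    congr 1
    ring
  have key : N - j ≤ (r - j) * Real.exp ((r / (r - j)) * d) := by
    have h1 : Real.exp ((r / (r - j)) * d) = Real.exp d * Real.exp (u * d) := by
      rw [← Real.exp_add, hsplit]; ring_nf
    have h2 : 1 + u * d ≤ Real.exp (u * d) := by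
      have := Real.add_one_le_exp (u * d)
      linarith
    have h3 : 1 + u * (1 - r / N) ≤ 1 + u * d := by
      nlinarith
    have h4 : Real.exp d * (1 + u * (1 - r / N)) ≤ Real.exp ((r / (r - j)) * d) := by
      rw [h1]
      exact mul_le_mul_of_nonneg_left (le_trans h3 h2) (le_of_lt (Real.exp_pos d))
    have h5 : (r - j) * (Real.exp d * (1 + u * (1 - r / N))) = N - j := by
      rw [hexp, hu]
      field_simp
      ring
    nlinarith [mul_le_mul_of_nonneg_left h4 (le_of_lt hrj)]
  calc Real.log (N - j) ≤ Real.log ((r - j) * Real.exp ((r / (r - j)) * d)) := by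
        apply Real.log_le_log (by linarith) key
    _ = Real.log (r - j) + (r / (r - j)) * d := by
        rw [Real.log_mul (ne_of_gt hrj) (ne_of_gt (Real.exp_pos _)), Real.log_exp]

/-- Harmonic sum bound: `∑_{j<s} 1/(r-j) ≤ log r - log k` when `r = k + s`. -/
lemma harmonic_bound (r k s : ℕ) (hrks : r = k + s) (hk1 : 1 ≤ k) :
    ∑ j ∈ Finset.range s, (1 : ℝ) / ((r : ℝ) - j) ≤ Real.log r - Real.log k := by
  have hterm : ∀ j ∈ Finset.range s,
      (1 : ℝ) / ((r : ℝ) - j) ≤ Real.log ((r:ℝ) - j) - Real.log ((r:ℝ) - (j+1)) := by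
    intro j hj
    rw [Finset.mem_range] at hj
    have hj1 : (j : ℝ) + 1 ≤ (s : ℝ) := by exact_mod_cast hj
    have hks : (r : ℝ) = (k : ℝ) + (s : ℝ) := by exact_mod_cast hrks
    have hk1R : (1:ℝ) ≤ (k:ℝ) := by exact_mod_cast hk1
    have h1 : 0 < (r:ℝ) - (j+1) := by linarith
    have h2 : 0 < (r:ℝ) - j := by linarith
    have h3 : Real.log (((r:ℝ) - (j+1)) / ((r:ℝ) - j)) ≤ ((r:ℝ) - (j+1)) / ((r:ℝ) - j) - 1 :=
      Real.log_le_sub_one_of_pos (div_pos h1 h2)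
    rw [Real.log_div (ne_of_gt h1) (ne_of_gt h2)] at h3
    have h4 : ((r:ℝ) - (j+1)) / ((r:ℝ) - j) - 1 = -(1 / ((r:ℝ) - j)) := by
      rw [eq_neg_iff_add_eq_zero, div_sub_one (ne_of_gt h2), ← add_div, div_eq_zero_iff]
      left
      ring
    rw [h4] at h3
    linarith
  calc ∑ j ∈ Finset.range s, (1 : ℝ) / ((r : ℝ) - j)
      ≤ ∑ j ∈ Finset.range s, (Real.log ((r:ℝ) - j) - Real.log ((r:ℝ) - (j+1))) :=
        Finset.sum_le_sum hterm
    _ = Real.log ((r:ℝ) - 0) - Real.log ((r:ℝ) - s) := by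
        have := Finset.sum_range_sub' (fun j => Real.log ((r:ℝ) - j)) s
        push_cast at this ⊢
        convert this using 2
    _ = Real.log r - Real.log k := by
        have hks : (r : ℝ) = (k : ℝ) + (s : ℝ) := by exact_mod_cast hrks
        rw [sub_zero]
        congr 1
        rw [hks]; ring_nf

lemma prod_range_cast_descFactorial (r : ℕ) : ∀ s : ℕ, s ≤ r →
    ∏ j ∈ Finset.range s, ((r : ℝ) - j) = (r.descFactorial s : ℝ) := by
  intro s
  induction s with
  | zero => simp
  | succ s ih =>
    intro hs
    rw [Finset.prod_range_succ, ih (by omega), Nat.descFactorial_succ]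
    rw [Nat.cast_mul, Nat.cast_sub (by omega)]
    ring

/-- The final arithmetic: from the master entropy inequality to the bound. -/
lemma endgame (r k s : ℕ) (hrks : r = k + s) (hk1 : 1 ≤ k) (hs1 : 1 ≤ s)
    (hek : (r:ℝ) ≤ Real.exp 1 * k) (a X : ℝ) (ha : Real.log r ≤ a)
    (hX : X ≤ -(k:ℝ)*a + (Real.log (k.factorial : ℝ) - Real.log (r.factorial : ℝ))
          + ∑ j ∈ Finset.range s, Real.log (1 - (j:ℝ)/Real.exp a)) :
    X ≤ -(r:ℝ) * Real.log r := by
  have hr1 : 1 ≤ r := by omega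
  have hrpos : (0:ℝ) < r := by exact_mod_cast hr1
  have hkpos : (0:ℝ) < k := by exact_mod_cast hk1
  set N : ℝ := Real.exp a with hN
  have hNpos : 0 < N := Real.exp_pos a
  have hNr : (r:ℝ) ≤ N := by
    calc (r:ℝ) = Real.exp (Real.log r) := (Real.exp_log hrpos).symm
    _ ≤ N := Real.exp_le_exp.mpr ha
  have hlogN : Real.log N = a := Real.log_exp a
  have hjr : ∀ j ∈ Finset.range s, (j:ℝ) + 1 ≤ (r:ℝ) := by
    intro j hj
    rw [Finset.mem_range] at hj
    have : j + 1 ≤ r := by omega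
    exact_mod_cast this
  -- rewrite the sum
  have hsum1 : ∑ j ∈ Finset.range s, Real.log (1 - (j:ℝ)/N)
      = (∑ j ∈ Finset.range s, Real.log (N - j)) - s * a := by
    have hterm : ∀ j ∈ Finset.range s, Real.log (1 - (j:ℝ)/N)
        = Real.log (N - j) - a := by
      intro j hj
      have h1 : (1 : ℝ) - (j:ℝ)/N = (N - j)/N := by field_simp
      have h2 : (0:ℝ) < N - j := by
        have := hjr j hj; linarith
      rw [h1, Real.log_div (ne_of_gt h2) (ne_of_gt hNpos), hlogN]
    rw [Finset.sum_congr rfl hterm, Finset.sum_sub_distrib, Finset.sum_const,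
      nsmul_eq_mul, Finset.card_range]
  have hsum2 : ∑ j ∈ Finset.range s, Real.log (N - j)
      ≤ (∑ j ∈ Finset.range s, Real.log ((r:ℝ) - j)) + (a - Real.log r) * (r:ℝ) := by
    have hterm : ∀ j ∈ Finset.range s, Real.log (N - j)
        ≤ Real.log ((r:ℝ) - j) + ((r:ℝ) / ((r:ℝ) - j)) * (a - Real.log r) := by
      intro j hj
      have := logterm_bound hrpos (by positivity) (hjr j hj) hNr
      rwa [hlogN] at this
    calc ∑ j ∈ Finset.range s, Real.log (N - j)
        ≤ ∑ j ∈ Finset.range s, (Real.log ((r:ℝ) - j)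
            + ((r:ℝ) / ((r:ℝ) - j)) * (a - Real.log r)) := Finset.sum_le_sum hterm
      _ = (∑ j ∈ Finset.range s, Real.log ((r:ℝ) - j))
            + (∑ j ∈ Finset.range s, (r:ℝ) / ((r:ℝ) - j)) * (a - Real.log r) := by
          rw [Finset.sum_add_distrib, Finset.sum_mul]
      _ ≤ (∑ j ∈ Finset.range s, Real.log ((r:ℝ) - j)) + (a - Real.log r) * (r:ℝ) := by
          have h1 : ∑ j ∈ Finset.range s, (r:ℝ) / ((r:ℝ) - j)
              = (r:ℝ) * ∑ j ∈ Finset.range s, (1:ℝ) / ((r:ℝ) - j) := by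
            rw [Finset.mul_sum]
            apply Finset.sum_congr rfl
            intro j _; ring
          have h2 : Real.log r - Real.log k ≤ 1 := by
            have h3 : Real.log (r:ℝ) ≤ Real.log (Real.exp 1 * k) :=
              Real.log_le_log hrpos hek
            rw [Real.log_mul (Real.exp_ne_zero 1) (ne_of_gt hkpos), Real.log_exp] at h3
            linarith
          have h4 := harmonic_bound r k s hrks hk1
          have h5 : ∑ j ∈ Finset.range s, (r:ℝ) / ((r:ℝ) - j) ≤ (r:ℝ) := by
            rw [h1]
            calc (r:ℝ) * ∑ j ∈ Finset.range s, (1:ℝ) / ((r:ℝ) - j)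
                ≤ (r:ℝ) * 1 := by
                  apply mul_le_mul_of_nonneg_left _ (le_of_lt hrpos)
                  linarith
              _ = (r:ℝ) := mul_one _
          have ha0 : 0 ≤ a - Real.log r := by linarith
          nlinarith
    done
  have hsum3 : ∑ j ∈ Finset.range s, Real.log ((r:ℝ) - j)
      = Real.log (r.factorial : ℝ) - Real.log (k.factorial : ℝ) := by
    have hsr : s ≤ r := by omega
    have h1 : ∏ j ∈ Finset.range s, ((r : ℝ) - j) = (r.descFactorial s : ℝ) :=
      prod_range_cast_descFactorial r s hsr
    have h2 : ∑ j ∈ Finset.range s, Real.log ((r:ℝ) - j)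
        = Real.log (∏ j ∈ Finset.range s, ((r : ℝ) - j)) := by
      rw [Real.log_prod]
      intro j hj
      have := hjr j hj
      intro hc
      nlinarith [hjr j hj]
    have h3 : (k.factorial : ℝ) * (r.descFactorial s : ℝ) = (r.factorial : ℝ) := by
      have h4 : (r - s) = k := by omega
      have := Nat.factorial_mul_descFactorial hsr
      rw [h4] at this
      exact_mod_cast this
    have hkf : (0:ℝ) < (k.factorial : ℝ) := by exact_mod_cast k.factorial_pos
    have hdf : (0:ℝ) < (r.descFactorial s : ℝ) := by
      have h6 : r.descFactorial s ≠ 0 := by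
        rw [Ne, Nat.descFactorial_eq_zero_iff_lt]; omega
      have : 0 < r.descFactorial s := Nat.pos_of_ne_zero h6
      exact_mod_cast this
    rw [h2, h1]
    have h5 : Real.log (k.factorial : ℝ) + Real.log (r.descFactorial s : ℝ)
        = Real.log (r.factorial : ℝ) := by
      rw [← Real.log_mul (ne_of_gt hkf) (ne_of_gt hdf), h3]
    linarith
  have hcast : (r:ℝ) = (k:ℝ) + (s:ℝ) := by exact_mod_cast hrks
  calc X ≤ -(k:ℝ)*a + (Real.log (k.factorial : ℝ) - Real.log (r.factorial : ℝ))
          + ∑ j ∈ Finset.range s, Real.log (1 - (j:ℝ)/N) := hX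
    _ ≤ -(k:ℝ)*a + (Real.log (k.factorial : ℝ) - Real.log (r.factorial : ℝ))
          + ((Real.log (r.factorial : ℝ) - Real.log (k.factorial : ℝ))
            + (a - Real.log r) * (r:ℝ) - s * a) := by
        rw [hsum1]
        have := le_trans hsum2 (by rw [hsum3])
        nlinarith [hsum2, hsum3]
    _ = -(r:ℝ) * Real.log r := by
        rw [hcast]; ring




open Real

/-- Main analytic lemma: the Lagrangian weight bound. -/
lemma key (r k s : ℕ) (hrks : r = k + s) (hs1 : 1 ≤ s) (hk1 : 1 ≤ k)
    (hek : (r:ℝ) ≤ Real.exp 1 * k)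
    (H : Hypergraph') (hH : ∀ e ∈ H.edges, e.card = r)
    (hint : ∀ e ∈ H.edges, ∀ e' ∈ H.edges, e ≠ e' → (e ∩ e').card < s)
    (w : ℕ → ℝ) (hw0 : ∀ v, 0 ≤ w v) (hw1 : ∑ v ∈ H.verts, w v = 1) :
    ∑ e ∈ H.edges, ∏ v ∈ e, w v ≤ (((r:ℝ)) ^ r)⁻¹ := by
  classical
  have hr1 : 1 ≤ r := by omega
  have hrpos : (0:ℝ) < r := by exact_mod_cast hr1
  set V := H.verts with hV
  set p : Finset ℕ → ℝ := fun e => ∏ v ∈ e, w v with hp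
  have hp0 : ∀ e, 0 ≤ p e := fun e => Finset.prod_nonneg (fun v _ => hw0 v)
  set E' := H.edges.filter (fun e => 0 < p e) with hE'
  have hsplit : ∑ e ∈ E', p e = ∑ e ∈ H.edges, p e := by
    apply Finset.sum_filter_of_ne
    intro e _ hne
    exact lt_of_le_of_ne (hp0 e) (Ne.symm hne)
  rcases Finset.eq_empty_or_nonempty E' with hE0 | hEne
  · rw [← hsplit, hE0, Finset.sum_empty]
    positivity
  set f := ∑ e ∈ E', p e with hf
  have hfpos : 0 < f := Finset.sum_pos (fun e he => (Finset.mem_filter.mp he).2) hEne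
  -- support edge facts
  have hmemE : ∀ e ∈ E', e ∈ H.edges ∧ 0 < p e := fun e he => Finset.mem_filter.mp he
  have hecard : ∀ e ∈ E', e.card = r := fun e he => hH e (hmemE e he).1
  have heV : ∀ e ∈ E', e ⊆ V := fun e he => H.edge_sub e (hmemE e he).1
  have hwpos : ∀ e ∈ E', ∀ v ∈ e, 0 < w v := by
    intro e he v hv
    rcases (hw0 v).eq_or_lt with h0 | h0
    · exfalso
      have : p e = 0 := Finset.prod_eq_zero hv h0.symm
      exact absurd this (ne_of_gt (hmemE e he).2)
    · exact h0
  have hσ : ∀ e ∈ E', ∑ v ∈ e, w v ≤ 1 := by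
    intro e he
    rw [← hw1]
    exact Finset.sum_le_sum_of_subset_of_nonneg (heV e he) (fun v _ _ => hw0 v)
  have hpe_le : ∀ e ∈ E', p e ≤ ((r:ℝ)⁻¹) ^ r := by
    intro e he
    calc p e ≤ ((∑ v ∈ e, w v) / r) ^ r :=
          amgm e w (fun v _ => hw0 v) (by omega) (hecard e he)
      _ ≤ ((r:ℝ)⁻¹) ^ r := by
          apply pow_le_pow_left₀ (div_nonneg (Finset.sum_nonneg fun v _ => hw0 v)
            (le_of_lt hrpos))
          rw [div_le_iff₀ hrpos, inv_mul_cancel₀ (ne_of_gt hrpos)]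
          exact hσ e he
  -- normalized edge distribution
  set q : Finset ℕ → ℝ := fun e => p e / f with hq
  have hqpos : ∀ e ∈ E', 0 < q e := fun e he => div_pos (hmemE e he).2 hfpos
  have hqsum : ∑ e ∈ E', q e = 1 := by
    rw [hq, ← Finset.sum_div, ← hf, div_self (ne_of_gt hfpos)]
  set A := ∑ e ∈ E', q e * (-Real.log (p e)) with hA
  have hrlogr_le_A : (r:ℝ) * Real.log r ≤ A := by
    rw [hA]
    calc (r:ℝ) * Real.log r = ∑ e ∈ E', q e * ((r:ℝ) * Real.log r) := by
          rw [← Finset.sum_mul, hqsum, one_mul]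
      _ ≤ ∑ e ∈ E', q e * (-Real.log (p e)) := by
          apply Finset.sum_le_sum
          intro e he
          apply mul_le_mul_of_nonneg_left _ (le_of_lt (hqpos e he))
          have h1 : Real.log (p e) ≤ Real.log (((r:ℝ)⁻¹) ^ r) :=
            Real.log_le_log (hmemE e he).2 (hpe_le e he)
          rw [Real.log_pow, Real.log_inv] at h1
          push_cast at h1
          linarith
  have ha : Real.log r ≤ A / r := by
    rw [le_div_iff₀ hrpos]
    linarith [hrlogr_le_A]
  -- tuple space setup
  obtain ⟨s', rfl⟩ : ∃ s', s = s' + 1 := ⟨s - 1, by omega⟩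
  set Y := Fintype.piFinset (fun _ : Fin (s'+1) => V) with hY
  set c : ℝ := (k.factorial : ℝ) / (r.factorial : ℝ) with hc
  have hcpos : 0 < c := div_pos (by exact_mod_cast k.factorial_pos)
    (by exact_mod_cast r.factorial_pos)
  have hcDF : c * ((r.descFactorial (s'+1) : ℕ) : ℝ) = 1 := by
    have h1 : (r - (s'+1)) = k := by omega
    have h2 := Nat.factorial_mul_descFactorial (show s'+1 ≤ r by omega)
    rw [h1] at h2
    have h3 : (k.factorial : ℝ) * ((r.descFactorial (s'+1) : ℕ) : ℝ) = (r.factorial : ℝ) := by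
      exact_mod_cast h2
    rw [hc, div_mul_eq_mul_div, h3, div_self (by exact_mod_cast r.factorial_ne_zero)]
  have hcD1 : c * (((r-1).descFactorial s' : ℕ) : ℝ) = (r:ℝ)⁻¹ := by
    have h1 : r.descFactorial (s'+1) = r * (r-1).descFactorial s' := descFactorial_peel r s'
    have h2 : c * ((r:ℝ) * (((r-1).descFactorial s' : ℕ) : ℝ)) = 1 := by
      rw [← hcDF, h1]
      push_cast
      ring
    have hr0 : (r:ℝ) ≠ 0 := ne_of_gt hrpos
    apply mul_left_cancel₀ hr0
    rw [mul_inv_cancel₀ hr0]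
    linear_combination h2
  set m : (Fin (s'+1) → ℕ) → ℝ :=
    fun y => c * ∑ e ∈ E', (if Function.Injective y ∧ (∀ t, y t ∈ e) then q e else 0) with hm
  have hm0 : ∀ y, 0 ≤ m y := by
    intro y
    apply mul_nonneg (le_of_lt hcpos)
    apply Finset.sum_nonneg
    intro e he
    split_ifs
    · exact le_of_lt (hqpos e he)
    · exact le_refl 0
  have huniq : ∀ (y : Fin (s'+1) → ℕ), Function.Injective y →
      ∀ e ∈ E', ∀ e' ∈ E', (∀ t, y t ∈ e) → (∀ t, y t ∈ e') → e = e' := by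
    intro y hyinj e he e' he' hye hye'
    by_contra hne
    have hsub : Finset.image y Finset.univ ⊆ e ∩ e' := by
      intro v hv
      rw [Finset.mem_image] at hv
      obtain ⟨t, _, rfl⟩ := hv
      exact Finset.mem_inter.mpr ⟨hye t, hye' t⟩
    have hcardim : (Finset.image y Finset.univ).card = s' + 1 := by
      rw [Finset.card_image_of_injective _ hyinj, Finset.card_univ, Fintype.card_fin]
    have := Finset.card_le_card hsub
    have hlt := hint e (hmemE e he).1 e' (hmemE e' he').1 hne
    omega
  have hm_edge : ∀ e ∈ E', ∀ y : Fin (s'+1) → ℕ,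
      Function.Injective y → (∀ t, y t ∈ e) → m y = c * q e := by
    intro e he y hyinj hye
    simp only [hm]
    congr 1
    have hz : ∀ e' ∈ E', e' ≠ e →
        (if Function.Injective y ∧ (∀ t, y t ∈ e') then q e' else 0) = 0 := by
      intro e' he' hne
      rw [if_neg]
      intro hcond
      exact hne (huniq y hyinj e' he' e he hcond.2 hye)
    rw [Finset.sum_eq_single_of_mem e he hz, if_pos ⟨hyinj, hye⟩]
  have hm_supp : ∀ y : Fin (s'+1) → ℕ, 0 < m y →
      ∃ e, e ∈ E' ∧ Function.Injective y ∧ (∀ t, y t ∈ e) := by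
    intro y hmy
    simp only [hm] at hmy
    have h1 : ∑ e ∈ E', (if Function.Injective y ∧ (∀ t, y t ∈ e) then q e else 0) ≠ 0 := by
      intro h0
      rw [h0, mul_zero] at hmy
      exact lt_irrefl 0 hmy
    obtain ⟨e, he, hne⟩ := Finset.exists_ne_zero_of_sum_ne_zero h1
    rw [ne_eq, ite_eq_right_iff] at hne
    push_neg at hne
    obtain ⟨hcond, _⟩ := hne
    exact ⟨e, he, hcond.1, hcond.2⟩
  -- the master sum-swap
  have hswap : ∀ g : (Fin (s'+1) → ℕ) → ℝ,
      ∑ y ∈ Y, m y * g y = c * ∑ e ∈ E', q e * ∑ y ∈ InjT (s'+1) e, g y := by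
    intro g
    have h1 : ∀ y ∈ Y, m y * g y
        = c * ∑ e ∈ E', (if Function.Injective y ∧ (∀ t, y t ∈ e) then q e * g y else 0) := by
      intro y _
      rw [hm, mul_assoc, Finset.sum_mul]
      congr 1
      apply Finset.sum_congr rfl
      intro e _
      rw [ite_mul, zero_mul]
    rw [Finset.sum_congr rfl h1, ← Finset.mul_sum]
    congr 1
    rw [Finset.sum_comm]
    apply Finset.sum_congr rfl
    intro e he
    rw [Finset.mul_sum, ← Finset.sum_filter]
    have h2 : Y.filter (fun y => Function.Injective y ∧ (∀ t, y t ∈ e)) = InjT (s'+1) e := by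
      ext y
      rw [Finset.mem_filter, mem_InjT, hY, Fintype.mem_piFinset]
      constructor
      · rintro ⟨_, hinj, hye⟩; exact ⟨hye, hinj⟩
      · rintro ⟨hye, hinj⟩; exact ⟨fun t => heV e he (hye t), hinj, hye⟩
    rw [h2]
  have hInjT_card : ∀ e ∈ E', ∑ y ∈ InjT (s'+1) e, (1:ℝ) = ((r.descFactorial (s'+1) : ℕ) : ℝ) := by
    intro e he
    rw [Finset.sum_const, nsmul_eq_mul, mul_one, card_InjT, hecard e he]
  have hm_sum : ∑ y ∈ Y, m y = 1 := by
    have h1 : ∀ y ∈ Y, m y = m y * 1 := by intro y _; rw [mul_one]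
    rw [Finset.sum_congr rfl h1, hswap, ]
    have h2 : ∀ e ∈ E', q e * ∑ y ∈ InjT (s'+1) e, (1:ℝ)
        = q e * ((r.descFactorial (s'+1) : ℕ) : ℝ) := by
      intro e he
      rw [hInjT_card e he]
    rw [Finset.sum_congr rfl h2]
    have h3 : ∑ e ∈ E', q e * ((r.descFactorial (s'+1) : ℕ) : ℝ)
        = ((r.descFactorial (s'+1) : ℕ) : ℝ) * ∑ e ∈ E', q e := by
      rw [Finset.mul_sum]
      apply Finset.sum_congr rfl
      intro e _
      ring
    rw [h3, hqsum, mul_one]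
    exact hcDF
  -- coordinate marginals
  have hcoord : ∀ (t : Fin (s'+1)) (φ : ℕ → ℝ), ∑ y ∈ Y, m y * φ (y t)
      = (r:ℝ)⁻¹ * ∑ e ∈ E', q e * ∑ v ∈ e, φ v := by
    intro t φ
    rw [hswap (fun y => φ (y t))]
    have h1 : ∀ e ∈ E', q e * ∑ y ∈ InjT (s'+1) e, φ (y t)
        = (((r-1).descFactorial s' : ℕ) : ℝ) * (q e * ∑ v ∈ e, φ v) := by
      intro e he
      rw [sum_InjT_coord s' e t φ, hecard e he]
      ring
    rw [Finset.sum_congr rfl h1, ← Finset.mul_sum, ← mul_assoc, hcD1]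
  have hlogcoord : ∀ t : Fin (s'+1), ∑ y ∈ Y, m y * Real.log (w (y t))
      = -((r:ℝ)⁻¹ * A) := by
    intro t
    rw [hcoord t (fun v => Real.log (w v))]
    have h1 : ∀ e ∈ E', q e * ∑ v ∈ e, Real.log (w v) = -(q e * (-Real.log (p e))) := by
      intro e he
      have h2 : ∑ v ∈ e, Real.log (w v) = Real.log (p e) := by
        rw [hp]
        exact (Real.log_prod (fun v (hv : v ∈ e) => (ne_of_gt (hwpos e he v hv) : w v ≠ 0))).symm
      rw [h2]; ring
    rw [Finset.sum_congr rfl h1, Finset.sum_neg_distrib, ← hA]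
    ring
  set β : ℝ := (r:ℝ)⁻¹ * ∑ e ∈ E', q e * ∑ v ∈ e, w v with hβ
  have hβcoord : ∀ t : Fin (s'+1), ∑ y ∈ Y, m y * w (y t) = β := fun t => hcoord t w
  have hβ_le : β ≤ (r:ℝ)⁻¹ := by
    rw [hβ]
    have h1 : ∑ e ∈ E', q e * ∑ v ∈ e, w v ≤ 1 := by
      calc ∑ e ∈ E', q e * ∑ v ∈ e, w v ≤ ∑ e ∈ E', q e * 1 := by
            apply Finset.sum_le_sum
            intro e he
            exact mul_le_mul_of_nonneg_left (hσ e he) (le_of_lt (hqpos e he))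
        _ = 1 := by simp only [mul_one]; exact hqsum
    calc (r:ℝ)⁻¹ * ∑ e ∈ E', q e * ∑ v ∈ e, w v ≤ (r:ℝ)⁻¹ * 1 :=
          mul_le_mul_of_nonneg_left h1 (by positivity)
      _ = (r:ℝ)⁻¹ := mul_one _
  have hβ_ge : Real.exp (-(A/r)) ≤ β := by
    set E₀ : ℝ := Real.exp (-(A/r)) with hE₀
    have hpoint : ∀ y ∈ Y, m y * (E₀ * (1 + Real.log (w (y 0)) + A/r)) ≤ m y * w (y 0) := by
      intro y _
      rcases (hm0 y).eq_or_lt with h0 | h0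
      · rw [← h0, zero_mul, zero_mul]
      · apply mul_le_mul_of_nonneg_left _ (le_of_lt h0)
        obtain ⟨e, he, hyinj, hye⟩ := hm_supp y h0
        have hwy : 0 < w (y 0) := hwpos e he _ (hye 0)
        set x : ℝ := Real.log (w (y 0)) with hx
        have h1 : (x + A/r) + 1 ≤ Real.exp (x + A/r) := Real.add_one_le_exp _
        have h2 : E₀ * (1 + x + A/r) ≤ E₀ * Real.exp (x + A/r) := by
          apply mul_le_mul_of_nonneg_left _ (le_of_lt (Real.exp_pos _))
          linarith
        have h3 : E₀ * Real.exp (x + A/r) = w (y 0) := by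
          rw [hE₀, ← Real.exp_add]
          have h4 : -(A/r) + (x + A/r) = x := by ring
          rw [h4, hx, Real.exp_log hwy]
        linarith
    have hlhs : ∑ y ∈ Y, m y * (E₀ * (1 + Real.log (w (y 0)) + A/r)) = E₀ := by
      have h1 : ∀ y ∈ Y, m y * (E₀ * (1 + Real.log (w (y 0)) + A/r))
          = E₀ * m y + E₀ * (m y * Real.log (w (y 0))) + (E₀ * (A/r)) * m y := by
        intro y _; ring
      rw [Finset.sum_congr rfl h1, Finset.sum_add_distrib, Finset.sum_add_distrib]
      simp only [← Finset.mul_sum]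
      rw [hm_sum, hlogcoord 0]
      field_simp
      ring
    calc Real.exp (-(A/r)) = ∑ y ∈ Y, m y * (E₀ * (1 + Real.log (w (y 0)) + A/r)) := hlhs.symm
      _ ≤ ∑ y ∈ Y, m y * w (y 0) := Finset.sum_le_sum hpoint
      _ = β := hβcoord 0
  have hβ_pos : 0 < β := lt_of_lt_of_le (Real.exp_pos _) hβ_ge
  -- tail sums
  have hT_lt : ∀ (t : Fin (s'+1)) (y : Fin (s'+1) → ℕ), 0 < m y →
      (∑ t' ∈ Finset.Ioi t, w (y t')) < 1 := by
    intro t y hmy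
    obtain ⟨e, he, hyinj, hye⟩ := hm_supp y hmy
    have h1 : ∑ t' ∈ Finset.Ioi t, w (y t') = ∑ v ∈ (Finset.Ioi t).image y, w v := by
      rw [Finset.sum_image (fun i _ j _ hij => hyinj hij)]
    have h2 : (Finset.Ioi t).image y ⊆ e.erase (y t) := by
      intro v hv
      rw [Finset.mem_image] at hv
      obtain ⟨t', ht', rfl⟩ := hv
      rw [Finset.mem_erase]
      refine ⟨?_, hye t'⟩
      intro hc
      have h3 := hyinj hc
      rw [h3] at ht'
      exact absurd (Finset.mem_Ioi.mp ht') (lt_irrefl t)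
    have h3 : ∑ v ∈ (Finset.Ioi t).image y, w v ≤ ∑ v ∈ e.erase (y t), w v :=
      Finset.sum_le_sum_of_subset_of_nonneg h2 (fun v _ _ => hw0 v)
    have h4 : ∑ v ∈ e.erase (y t), w v = (∑ v ∈ e, w v) - w (y t) :=
      Finset.sum_erase_eq_sub (hye t)
    have h5 := hwpos e he _ (hye t)
    have h6 := hσ e he
    rw [h1]
    linarith
  have hmT : ∀ t : Fin (s'+1), ∑ y ∈ Y, m y * (∑ t' ∈ Finset.Ioi t, w (y t'))
      = ((Finset.Ioi t).card : ℝ) * β := by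
    intro t
    have h1 : ∀ y ∈ Y, m y * (∑ t' ∈ Finset.Ioi t, w (y t'))
        = ∑ t' ∈ Finset.Ioi t, m y * w (y t') := fun y _ => Finset.mul_sum _ _ _
    rw [Finset.sum_congr rfl h1, Finset.sum_comm]
    have h2 : ∀ t' ∈ Finset.Ioi t, ∑ y ∈ Y, m y * w (y t') = β := fun t' _ => hβcoord t'
    rw [Finset.sum_congr rfl h2, Finset.sum_const, nsmul_eq_mul]
  have hJs' : ∀ t : Fin (s'+1), ((Finset.Ioi t).card : ℝ) ≤ (s' : ℝ) := by
    intro t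
    have h1 : (Finset.Ioi t).card = s' - (t:ℕ) := by
      rw [Fin.card_Ioi]
      omega
    rw [h1]
    have : s' - (t:ℕ) ≤ s' := Nat.sub_le _ _
    exact_mod_cast this
  have hs'r : (s' : ℝ) + 2 ≤ (r:ℝ) := by exact_mod_cast (show s' + 2 ≤ r by omega)
  have hjensen : ∀ t : Fin (s'+1),
      ∑ y ∈ Y, m y * Real.log (1 - ∑ t' ∈ Finset.Ioi t, w (y t'))
      ≤ Real.log (1 - ((Finset.Ioi t).card : ℝ) * Real.exp (-(A/r))) := by
    intro t
    set J : ℝ := ((Finset.Ioi t).card : ℝ) with hJ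
    have hJ0 : (0:ℝ) ≤ J := Nat.cast_nonneg _
    have hJβ : J * β ≤ (s':ℝ) * (r:ℝ)⁻¹ :=
      mul_le_mul (hJs' t) hβ_le (le_of_lt hβ_pos) (Nat.cast_nonneg s')
    have hc2 : 0 < 1 - J * β := by
      have h1 : (s':ℝ) * (r:ℝ)⁻¹ < 1 := by
        rw [mul_inv_lt_iff₀ hrpos, one_mul]
        linarith
      linarith
    have hpt : ∀ y ∈ Y, m y * Real.log (1 - ∑ t' ∈ Finset.Ioi t, w (y t'))
        ≤ m y * ((Real.log (1 - J*β) - 1)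
            + (1 - J*β)⁻¹ * (1 - ∑ t' ∈ Finset.Ioi t, w (y t'))) := by
      intro y _
      rcases (hm0 y).eq_or_lt with h0 | h0
      · rw [← h0, zero_mul, zero_mul]
      · apply mul_le_mul_of_nonneg_left _ (le_of_lt h0)
        have hx0 : 0 < 1 - ∑ t' ∈ Finset.Ioi t, w (y t') := by
          have := hT_lt t y h0
          linarith
        have h1 : Real.log (1 - ∑ t' ∈ Finset.Ioi t, w (y t')) - Real.log (1 - J*β)
            ≤ (1 - ∑ t' ∈ Finset.Ioi t, w (y t'))/(1 - J*β) - 1 := by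
          rw [← Real.log_div (ne_of_gt hx0) (ne_of_gt hc2)]
          exact Real.log_le_sub_one_of_pos (div_pos hx0 hc2)
        have h2 : (1 - ∑ t' ∈ Finset.Ioi t, w (y t'))/(1 - J*β)
            = (1 - J*β)⁻¹ * (1 - ∑ t' ∈ Finset.Ioi t, w (y t')) := by
          rw [div_eq_inv_mul]
        linarith [h1]
    have hsum : ∑ y ∈ Y, m y * ((Real.log (1 - J*β) - 1)
          + (1 - J*β)⁻¹ * (1 - ∑ t' ∈ Finset.Ioi t, w (y t')))
        = Real.log (1 - J*β) := by
      have h1 : ∀ y ∈ Y, m y * ((Real.log (1 - J*β) - 1)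
            + (1 - J*β)⁻¹ * (1 - ∑ t' ∈ Finset.Ioi t, w (y t')))
          = (Real.log (1 - J*β) - 1) * m y
            + (1 - J*β)⁻¹ * (m y - m y * (∑ t' ∈ Finset.Ioi t, w (y t'))) := by
        intro y _; ring
      rw [Finset.sum_congr rfl h1, Finset.sum_add_distrib]
      simp only [← Finset.mul_sum, Finset.sum_sub_distrib]
      rw [hm_sum, hmT t, ← hJ]
      field_simp
      ring
    calc ∑ y ∈ Y, m y * Real.log (1 - ∑ t' ∈ Finset.Ioi t, w (y t'))
        ≤ ∑ y ∈ Y, m y * ((Real.log (1 - J*β) - 1)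
            + (1 - J*β)⁻¹ * (1 - ∑ t' ∈ Finset.Ioi t, w (y t'))) := Finset.sum_le_sum hpt
      _ = Real.log (1 - J*β) := hsum
      _ ≤ Real.log (1 - J * Real.exp (-(A/r))) := by
          apply Real.log_le_log hc2
          have := mul_le_mul_of_nonneg_left hβ_ge hJ0
          linarith
  -- Gibbs' inequality with the sequential reference measure
  have hμ0 : ∀ y ∈ Y, 0 ≤ mu w V (s'+1) y := fun y _ => mu_nonneg hw0 _ y
  have hmass : ∑ y ∈ Y, mu w V (s'+1) y ≤ ∑ y ∈ Y, m y := by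
    rw [hm_sum]
    exact mu_mass hw0 hw1 (s'+1)
  have hsupp_mu : ∀ y ∈ Y, 0 < m y → 0 < mu w V (s'+1) y := by
    intro y _ hmy
    obtain ⟨e, he, hyinj, hye⟩ := hm_supp y hmy
    exact (mu_support hw0 e (heV e he) (hwpos e he) (hσ e he) (s'+1) y hyinj hye).1
  have hgibbs := gibbs Y m (mu w V (s'+1)) (fun y _ => hm0 y) hμ0 hmass hsupp_mu
  -- expansion of log mu
  have hmulog : ∑ y ∈ Y, m y * Real.log (mu w V (s'+1) y)
      = ∑ t : Fin (s'+1), ((∑ y ∈ Y, m y * Real.log (w (y t)))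
          - ∑ y ∈ Y, m y * Real.log (1 - ∑ t' ∈ Finset.Ioi t, w (y t'))) := by
    have h1 : ∀ y ∈ Y, m y * Real.log (mu w V (s'+1) y)
        = ∑ t : Fin (s'+1), (m y * Real.log (w (y t))
            - m y * Real.log (1 - ∑ t' ∈ Finset.Ioi t, w (y t'))) := by
      intro y _
      rcases (hm0 y).eq_or_lt with h0 | h0
      · rw [← h0]
        simp
      · obtain ⟨e, he, hyinj, hye⟩ := hm_supp y h0
        have h2 := (mu_support hw0 e (heV e he) (hwpos e he) (hσ e he) (s'+1) y hyinj hye).2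
        rw [h2, Finset.mul_sum]
        apply Finset.sum_congr rfl
        intro t _
        ring
    rw [Finset.sum_congr rfl h1, Finset.sum_comm]
    apply Finset.sum_congr rfl
    intro t _
    rw [Finset.sum_sub_distrib]
  -- entropy identity for m
  have hmlogm : ∑ y ∈ Y, m y * Real.log (m y) = -A - Real.log f + Real.log c := by
    rw [hswap (fun y => Real.log (m y))]
    have h1 : ∀ e ∈ E', q e * ∑ y ∈ InjT (s'+1) e, Real.log (m y)
        = q e * (((r.descFactorial (s'+1) : ℕ) : ℝ) * Real.log (c * q e)) := by
      intro e he
      congr 1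
      have h2 : ∀ y ∈ InjT (s'+1) e, Real.log (m y) = Real.log (c * q e) := by
        intro y hy
        rw [mem_InjT] at hy
        rw [hm_edge e he y hy.2 hy.1]
      rw [Finset.sum_congr rfl h2, Finset.sum_const, nsmul_eq_mul, card_InjT, hecard e he]
    rw [Finset.sum_congr rfl h1, Finset.mul_sum]
    have h3 : ∀ e ∈ E', c * (q e * (((r.descFactorial (s'+1) : ℕ) : ℝ) * Real.log (c * q e)))
        = q e * Real.log c + q e * Real.log (q e) := by
      intro e he
      have h4 : Real.log (c * q e) = Real.log c + Real.log (q e) :=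
        Real.log_mul (ne_of_gt hcpos) (ne_of_gt (hqpos e he))
      calc c * (q e * (((r.descFactorial (s'+1) : ℕ) : ℝ) * Real.log (c * q e)))
          = (c * ((r.descFactorial (s'+1) : ℕ) : ℝ)) * (q e * Real.log (c * q e)) := by ring
        _ = q e * Real.log (c * q e) := by rw [hcDF, one_mul]
        _ = q e * Real.log c + q e * Real.log (q e) := by rw [h4]; ring
    rw [Finset.sum_congr rfl h3, Finset.sum_add_distrib]
    have h5 : ∑ e ∈ E', q e * Real.log c = Real.log c := by
      rw [← Finset.sum_mul, hqsum, one_mul]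
    have h6 : ∑ e ∈ E', q e * Real.log (q e) = -A - Real.log f := by
      have h7 : ∀ e ∈ E', q e * Real.log (q e)
          = -(q e * (-Real.log (p e))) - Real.log f * q e := by
        intro e he
        have h8 : Real.log (q e) = Real.log (p e) - Real.log f := by
          rw [hq]
          exact Real.log_div (ne_of_gt (hmemE e he).2) (ne_of_gt hfpos)
        rw [h8]
        ring
      rw [Finset.sum_congr rfl h7, Finset.sum_sub_distrib, Finset.sum_neg_distrib, ← hA,
        ← Finset.mul_sum, hqsum, mul_one]
    rw [h5, h6]
    ring
  -- the master inequality
  have hcastr : ((s':ℝ) + 1) = (r:ℝ) - k := by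
    have h0 : (r:ℝ) = (k:ℝ) + ((s':ℝ)+1) := by exact_mod_cast hrks
    linarith
  have hmaster : Real.log f ≤ -(k:ℝ) * (A/r)
      + (Real.log (k.factorial : ℝ) - Real.log (r.factorial : ℝ))
      + ∑ j ∈ Finset.range (s'+1), Real.log (1 - (j:ℝ)/Real.exp (A/r)) := by
    have h1 : ∑ y ∈ Y, m y * Real.log (mu w V (s'+1) y)
        ≥ ((s':ℝ)+1) * (-((r:ℝ)⁻¹ * A))
          - ∑ t : Fin (s'+1), Real.log (1 - ((Finset.Ioi t).card : ℝ) * Real.exp (-(A/r))) := by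
      rw [hmulog]
      have h2 : ∀ t : Fin (s'+1), (∑ y ∈ Y, m y * Real.log (w (y t)))
            - ∑ y ∈ Y, m y * Real.log (1 - ∑ t' ∈ Finset.Ioi t, w (y t'))
          ≥ -((r:ℝ)⁻¹ * A)
            - Real.log (1 - ((Finset.Ioi t).card : ℝ) * Real.exp (-(A/r))) := by
        intro t
        have := hjensen t
        have h3 := hlogcoord t
        linarith
      calc ∑ t : Fin (s'+1), ((∑ y ∈ Y, m y * Real.log (w (y t)))
              - ∑ y ∈ Y, m y * Real.log (1 - ∑ t' ∈ Finset.Ioi t, w (y t')))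
          ≥ ∑ t : Fin (s'+1), (-((r:ℝ)⁻¹ * A)
              - Real.log (1 - ((Finset.Ioi t).card : ℝ) * Real.exp (-(A/r)))) :=
            Finset.sum_le_sum (fun t _ => h2 t)
        _ = ((s':ℝ)+1) * (-((r:ℝ)⁻¹ * A))
              - ∑ t : Fin (s'+1), Real.log (1 - ((Finset.Ioi t).card : ℝ) * Real.exp (-(A/r))) := by
            rw [Finset.sum_sub_distrib, Finset.sum_const, Finset.card_univ, Fintype.card_fin,
              nsmul_eq_mul]
            push_cast
            ring
    have hS1 : ∑ t : Fin (s'+1), Real.log (1 - ((Finset.Ioi t).card : ℝ) * Real.exp (-(A/r)))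
        = ∑ j ∈ Finset.range (s'+1), Real.log (1 - (j:ℝ)/Real.exp (A/r)) := by
      have h2 : ∀ t : Fin (s'+1), Real.log (1 - ((Finset.Ioi t).card : ℝ) * Real.exp (-(A/r)))
          = Real.log (1 - (((s' - (t:ℕ)) : ℕ) : ℝ)/Real.exp (A/r)) := by
        intro t
        congr 2
        rw [Fin.card_Ioi]
        have h3 : s' + 1 - 1 - (t:ℕ) = s' - (t:ℕ) := by omega
        rw [h3, Real.exp_neg]
        exact (div_eq_mul_inv _ _).symm
      rw [Finset.sum_congr rfl (fun t _ => h2 t)]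
      rw [Fin.sum_univ_eq_sum_range (fun i => Real.log (1 - (((s' - i) : ℕ) : ℝ)/Real.exp (A/r)))
        (s'+1)]
      have h4 := Finset.sum_range_reflect
        (fun j => Real.log (1 - (j:ℝ)/Real.exp (A/r))) (s'+1)
      simp only [Nat.add_sub_cancel] at h4
      exact h4
    have h5 : -A - Real.log f + Real.log c
        ≥ ((s':ℝ)+1) * (-((r:ℝ)⁻¹ * A))
          - ∑ j ∈ Finset.range (s'+1), Real.log (1 - (j:ℝ)/Real.exp (A/r)) := by
      rw [← hS1, ← hmlogm]
      linarith [le_trans h1 hgibbs]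
    have hlogc : Real.log c = Real.log (k.factorial : ℝ) - Real.log (r.factorial : ℝ) := by
      rw [hc]
      exact Real.log_div (by exact_mod_cast k.factorial_ne_zero)
        (by exact_mod_cast r.factorial_ne_zero)
    have h6 : ((s':ℝ)+1) * (-((r:ℝ)⁻¹ * A)) = -A + (k:ℝ) * (A/r) := by
      rw [hcastr]
      field_simp
      ring
    rw [hlogc] at h5
    rw [h6] at h5
    linarith
  -- conclude via the endgame
  have hlogf := endgame r k (s'+1) hrks hk1 hs1 hek (A/r) (Real.log f) ha hmaster
  have hfle : f ≤ ((r:ℝ)^r)⁻¹ := by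
    calc f = Real.exp (Real.log f) := (Real.exp_log hfpos).symm
      _ ≤ Real.exp (-(r:ℝ) * Real.log r) := Real.exp_le_exp.mpr hlogf
      _ = ((r:ℝ)^r)⁻¹ := by
          rw [neg_mul, Real.exp_neg]
          congr 1
          rw [Real.exp_nat_mul, Real.exp_log hrpos]
  rw [← hsplit]
  exact hfle




end Cor63

/-- **Corollary 6.3.** For every `r ≥ 4`, with `k = ⌈r/e⌉`, if
`Lset ⊆ {0, 1, …, r−k−1}` and `H` is an `Lset`-intersecting `r`-uniform hypergraph,
then `b(H) ≤ r!/r^r`. -/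
theorem LIntersecting_blowupDensity_le (r : ℕ) (hr : 4 ≤ r) (k : ℕ)
    (hk : k = ⌈(r : ℝ) / Real.exp 1⌉₊)
    (Lset : Set ℕ) (hL : ∀ l ∈ Lset, l ≤ r - k - 1)
    (H : Hypergraph') (hH : H.IsUniform r) (hHL : LIntersecting Lset H) :
    blowupDensity r H ≤ (r.factorial : ℝ) / (r : ℝ) ^ r := by
  have hrR : (4:ℝ) ≤ (r:ℝ) := by exact_mod_cast hr
  have he2 : (2:ℝ) ≤ Real.exp 1 := by
    have := Real.add_one_le_exp 1
    linarith
  have hepos : (0:ℝ) < Real.exp 1 := Real.exp_pos 1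
  have hk1 : 1 ≤ k := by
    rw [hk]
    rw [Nat.one_le_ceil_iff]
    positivity
  have hk_le : k ≤ r - 1 := by
    rw [hk]
    apply Nat.ceil_le.mpr
    have h1 : ((r - 1 : ℕ) : ℝ) = (r:ℝ) - 1 := by
      rw [Nat.cast_sub (by omega)]
      norm_num
    rw [h1]
    rw [div_le_iff₀ hepos]
    nlinarith
  set s := r - k with hs
  have hrks : r = k + s := by omega
  have hs1 : 1 ≤ s := by omega
  have hek : (r:ℝ) ≤ Real.exp 1 * k := by
    have h1 : (r:ℝ)/Real.exp 1 ≤ (k:ℝ) := by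
      rw [hk]
      exact_mod_cast Nat.le_ceil _
    calc (r:ℝ) = ((r:ℝ)/Real.exp 1) * Real.exp 1 := by
          field_simp
      _ ≤ (k:ℝ) * Real.exp 1 := by
          apply mul_le_mul_of_nonneg_right h1 (le_of_lt hepos)
      _ = Real.exp 1 * k := mul_comm _ _
  have hint : ∀ e ∈ H.edges, ∀ e' ∈ H.edges, e ≠ e' → (e ∩ e').card < s := by
    intro e he e' he' hne
    have h1 := hHL e he e' he' hne
    have h2 := hL _ h1
    omega
  have hlag : lagrangian H ≤ (((r:ℝ)) ^ r)⁻¹ := by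
    apply Real.sSup_le
    · rintro x ⟨w, hw0, hw1, rfl⟩
      exact Cor63.key r k s hrks hs1 hk1 hek H hH hint w hw0 hw1
    · positivity
  unfold blowupDensity
  calc (r.factorial : ℝ) * lagrangian H ≤ (r.factorial:ℝ) * (((r:ℝ))^r)⁻¹ :=
      mul_le_mul_of_nonneg_left hlag (by positivity)
    _ = (r.factorial : ℝ)/(r:ℝ)^r := by rw [div_eq_mul_inv]
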